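/- Let θ be a Dirichlet character of modulus t, let q_1, …, q_u be distinct primes and b_1, …, b_u ≥ 1. Assume f : ℕ → ℂ is a multiplicative function such that f(n) = θ(n) for every n coprime to q_1⋯q_u, and f(q_i^{b_i+ℓ}) = f(q_i^{b_i})·θ(q_i^ℓ) for every i = 1, …, u and every ℓ ≥ 0. Then f is periodic with period q_1^{b_1}⋯q_u^{b_u}·t, i.e. f(n + q_1^{b_1}⋯q_u^{b_u}·t) = f(n) for all n ≥ 1. -/

import Mathlib

open scoped BigOperators Classical

noncomputable section

/-- `f : ℕ → ℂ` is multiplicative: `f 1 = 1` and `f (a*b) = f a * f b` for coprime `a, b`. -/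
def IsMult (f : ℕ → ℂ) : Prop :=
  f 1 = 1 ∧ ∀ a b : ℕ, Nat.Coprime a b → f (a * b) = f a * f b

/-- `Per_m(f)`: the set of positions `n ≥ 1` such that `f` is constant on
`{n' ≥ 1 : n' ≡ n (mod m)}`. -/
def PerSet (f : ℕ → ℂ) (m : ℕ) : Set ℕ :=
  {n : ℕ | 1 ≤ n ∧ ∀ n' : ℕ, 1 ≤ n' → n' % m = n % m → f n' = f n}

/-- `f` is Toeplitz: every position `n ≥ 1` has a period. -/
def IsToeplitz (f : ℕ → ℂ) : Prop :=
  ∀ n : ℕ, 1 ≤ n → ∃ m : ℕ, 1 ≤ m ∧ n ∈ PerSet f m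

/-- `χ : ℕ → ℂ` is (the function on `ℕ` induced by) a Dirichlet character of modulus `m`. -/
def IsDirichletCharFn (m : ℕ) (χ : ℕ → ℂ) : Prop :=
  ∃ χ₀ : DirichletCharacter ℂ m, ∀ n : ℕ, χ n = χ₀ (n : ZMod m)

/-- `χ : ℕ → ℂ` is induced by a primitive Dirichlet character of modulus `m`. -/
def IsPrimitiveDirichletCharFn (m : ℕ) (χ : ℕ → ℂ) : Prop :=
  ∃ χ₀ : DirichletCharacter ℂ m, χ₀.IsPrimitive ∧ ∀ n : ℕ, χ n = χ₀ (n : ZMod m)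

/-- `𝔻(f,g) < ∞`: convergence of the Granville–Soundararajan distance series. -/
def PretConv (f g : ℕ → ℂ) : Prop :=
  Summable (fun p : Nat.Primes =>
    (1 : ℝ) / ((p : ℕ) : ℝ) * (1 - (f (p : ℕ) * (starRingEnd ℂ) (g (p : ℕ))).re))

/-- `f` is Besicovitch rationally almost periodic. -/
def IsRAP (f : ℕ → ℂ) : Prop :=
  ∀ ε : ℝ, 0 < ε → ∃ (g : ℕ → ℂ) (m : ℕ), 1 ≤ m ∧ (∀ n : ℕ, g (n + m) = g n) ∧
    Filter.limsup
      (fun N : ℕ => (1 : ℝ) / N * ∑ n ∈ Finset.Icc 1 N, ‖f n - g n‖)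
      Filter.atTop < ε

lemma mult_prod_aux {u : ℕ} (f : ℕ → ℂ) (hf : IsMult f) (g : Fin u → ℕ)
    (hcop : ∀ i j, i ≠ j → Nat.Coprime (g i) (g j)) :
    ∀ s : Finset (Fin u), f (∏ i ∈ s, g i) = ∏ i ∈ s, f (g i) := by
  intro s
  induction s using Finset.induction_on with
  | empty => simpa using hf.1
  | @insert j s' hj ih =>
    rw [Finset.prod_insert hj, Finset.prod_insert hj, ← ih,
      hf.2 _ _ (Nat.Coprime.prod_right fun i hi => hcop j i (fun h => hj (h ▸ hi)))]

lemma prod_dvd_aux {u : ℕ} (g : Fin u → ℕ)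
    (hcop : ∀ i j, i ≠ j → Nat.Coprime (g i) (g j)) (n : ℕ) (hd : ∀ i, g i ∣ n) :
    ∀ s : Finset (Fin u), (∏ i ∈ s, g i) ∣ n := by
  intro s
  induction s using Finset.induction_on with
  | empty => simpa using one_dvd n
  | @insert j s' hj ih =>
    rw [Finset.prod_insert hj]
    exact Nat.Coprime.mul_dvd_of_dvd_of_dvd
      (Nat.Coprime.prod_right fun i hi => hcop j i (fun h => hj (h ▸ hi))) (hd j) ih

theorem periodic_of_character_modification
    (t : ℕ) (ht : 1 ≤ t) (θ : ℕ → ℂ) (hθ : IsDirichletCharFn t θ)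
    (u : ℕ) (q : Fin u → ℕ) (hq : ∀ i, Nat.Prime (q i)) (hqinj : Function.Injective q)
    (b : Fin u → ℕ) (hb : ∀ i, 1 ≤ b i)
    (f : ℕ → ℂ) (hf : IsMult f)
    (hfθ : ∀ n : ℕ, 1 ≤ n → (∀ i, ¬ q i ∣ n) → f n = θ n)
    (hfq : ∀ (i : Fin u) (ℓ : ℕ), f (q i ^ (b i + ℓ)) = f (q i ^ b i) * θ (q i ^ ℓ)) :
    ∀ n : ℕ, 1 ≤ n → f (n + (∏ i, q i ^ b i) * t) = f n := by
  obtain ⟨χ₀, hχ⟩ := hθ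
  have hθpow : ∀ a k : ℕ, θ (a ^ k) = θ a ^ k := by
    intro a k; rw [hχ, hχ]; push_cast; exact map_pow χ₀ _ _
  have hθprod : ∀ (g : Fin u → ℕ), θ (∏ i, g i) = ∏ i, θ (g i) := by
    intro g; rw [hχ]; push_cast; rw [map_prod]; simp [hχ]
  have hθmul : ∀ x y : ℕ, θ (x * y) = θ x * θ y := by
    intro x y; rw [hχ, hχ, hχ]; push_cast; exact map_mul χ₀ _ _
  have hqcop : ∀ i j : Fin u, i ≠ j → Nat.Coprime (q i) (q j) := fun i j hij =>
    (Nat.coprime_primes (hq i) (hq j)).mpr (fun h => hij (hqinj h))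
  have hcop : ∀ (e e' : Fin u → ℕ) (i j : Fin u), i ≠ j →
      Nat.Coprime (q i ^ e i) (q j ^ e' j) :=
    fun e e' i j hij => Nat.Coprime.pow _ _ (hqcop i j hij)
  -- Key factorization lemma
  have key : ∀ n : ℕ, 1 ≤ n →
      f n = f (∏ i, q i ^ min (n.factorization (q i)) (b i)) *
        θ (n / ∏ i, q i ^ min (n.factorization (q i)) (b i)) := by
    intro n hn
    set a : Fin u → ℕ := fun i => n.factorization (q i) with ha
    set c : Fin u → ℕ := fun i => min (a i) (b i) with hc
    set A := ∏ i, q i ^ a i with hA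
    set D := ∏ i, q i ^ c i with hD
    have hAdvd : A ∣ n :=
      prod_dvd_aux _ (hcop a a) n (fun i => Nat.ordProj_dvd n (q i)) Finset.univ
    have hApos : 0 < A := Finset.prod_pos (fun i _ => pow_pos (hq i).pos _)
    have hDpos : 0 < D := Finset.prod_pos (fun i _ => pow_pos (hq i).pos _)
    set n₀ := n / A with hn₀
    have hnA : n = A * n₀ := (Nat.mul_div_cancel' hAdvd).symm
    have hn₀pos : 0 < n₀ := Nat.div_pos (Nat.le_of_dvd hn hAdvd) hApos
    have hAfact : ∀ i, A.factorization (q i) = a i := by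
      intro i
      rw [hA, Nat.factorization_prod (fun j _ => pow_ne_zero _ (hq j).ne_zero),
        Finset.sum_apply', Finset.sum_eq_single i]
      · rw [(hq i).factorization_pow, Finsupp.single_apply, if_pos rfl]
      · intro j _ hji
        rw [(hq j).factorization_pow, Finsupp.single_apply,
          if_neg (fun h => hji (hqinj h))]
      · simp
    have hn₀notdvd : ∀ i, ¬ q i ∣ n₀ := by
      intro i hdvd
      have h1 : n₀.factorization (q i) = 0 := by
        rw [hn₀, Nat.factorization_div hAdvd, Finsupp.tsub_apply, hAfact i]
        simp [ha]
      have h2 := Nat.Prime.factorization_pos_of_dvd (hq i) hn₀pos.ne' hdvd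
      omega
    have hfn₀ : f n₀ = θ n₀ := hfθ n₀ hn₀pos (hn₀notdvd)
    have hcopAn₀ : Nat.Coprime A n₀ :=
      Nat.Coprime.prod_left fun i _ =>
        Nat.Coprime.pow_left _ (((hq i).coprime_iff_not_dvd).mpr (hn₀notdvd i))
    have hfq' : ∀ i, f (q i ^ a i) = f (q i ^ c i) * θ (q i) ^ (a i - c i) := by
      intro i
      rcases le_or_gt (b i) (a i) with h | h
      · have hc' : c i = b i := min_eq_right h
        have h3 := hfq i (a i - b i)
        rw [Nat.add_sub_cancel' h] at h3
        rw [h3, hc', hθpow]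
      · have hc' : c i = a i := min_eq_left h.le
        rw [hc', Nat.sub_self, pow_zero, mul_one]
    -- n / D
    have hADprod : A = D * ∏ i, q i ^ (a i - c i) := by
      rw [hA, hD, ← Finset.prod_mul_distrib]
      refine Finset.prod_congr rfl fun i _ => ?_
      rw [← pow_add]
      congr 1
      simp [hc]
    have hnD : n / D = (∏ i, q i ^ (a i - c i)) * n₀ := by
      rw [hnA, hADprod, mul_assoc, Nat.mul_div_cancel_left _ hDpos]
    calc f n = f A * f n₀ := by rw [hnA]; exact hf.2 _ _ hcopAn₀
      _ = (∏ i, f (q i ^ a i)) * f n₀ := by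
          rw [mult_prod_aux f hf _ (hcop a a) Finset.univ]
      _ = (∏ i, f (q i ^ c i) * θ (q i) ^ (a i - c i)) * θ n₀ := by
          rw [hfn₀]; congr 1; exact Finset.prod_congr rfl fun i _ => hfq' i
      _ = ((∏ i, f (q i ^ c i)) * ∏ i, θ (q i) ^ (a i - c i)) * θ n₀ := by
          rw [Finset.prod_mul_distrib]
      _ = f D * θ (n / D) := by
          rw [hnD, hθmul, hθprod, mult_prod_aux f hf _ (hcop c c) Finset.univ]
          have : ∀ i, θ (q i ^ (a i - c i)) = θ (q i) ^ (a i - c i) :=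
            fun i => hθpow _ _
          rw [Finset.prod_congr rfl fun i _ => this i]
          ring
  -- Main argument
  intro n hn
  set Q := ∏ i, q i ^ b i with hQ
  have hQpos : 0 < Q := Finset.prod_pos (fun i _ => pow_pos (hq i).pos _)
  have hn' : 1 ≤ n + Q * t := le_add_right hn
  have hmin : ∀ i, min ((n + Q * t).factorization (q i)) (b i)
      = min (n.factorization (q i)) (b i) := by
    intro i
    have hQt : q i ^ b i ∣ Q * t :=
      dvd_mul_of_dvd_left (Finset.dvd_prod_of_mem _ (Finset.mem_univ i)) t
    have h1 : q i ^ min (n.factorization (q i)) (b i) ∣ n + Q * t := by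
      exact dvd_add (dvd_trans (pow_dvd_pow _ (min_le_left _ _)) (Nat.ordProj_dvd n (q i)))
        (dvd_trans (pow_dvd_pow _ (min_le_right _ _)) hQt)
    have h2 : q i ^ min ((n + Q * t).factorization (q i)) (b i) ∣ n := by
      have hd1 : q i ^ min ((n + Q * t).factorization (q i)) (b i) ∣ n + Q * t :=
        dvd_trans (pow_dvd_pow _ (min_le_left _ _)) (Nat.ordProj_dvd _ (q i))
      have hd2 : q i ^ min ((n + Q * t).factorization (q i)) (b i) ∣ Q * t :=
        dvd_trans (pow_dvd_pow _ (min_le_right _ _)) hQt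
      have := Nat.dvd_sub hd1 hd2
      simpa using this
    have h1' := (Nat.Prime.pow_dvd_iff_le_factorization (hq i)
      (by positivity)).mp h1
    have h2' := (Nat.Prime.pow_dvd_iff_le_factorization (hq i)
      (by omega)).mp h2
    omega
  set D := ∏ i, q i ^ min (n.factorization (q i)) (b i) with hD
  have hDpos : 0 < D := Finset.prod_pos (fun i _ => pow_pos (hq i).pos _)
  have hDQ : D ∣ Q :=
    Finset.prod_dvd_prod_of_dvd _ _ fun i _ => pow_dvd_pow _ (min_le_right _ _)
  have hkey1 := key n hn
  have hkey2 := key (n + Q * t) hn'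
  simp only [hmin] at hkey2
  rw [hkey2, ← hD, hkey1, ← hD]
  congr 1
  have hsplit : (n + Q * t) / D = n / D + (Q / D) * t := by
    have : Q * t = D * ((Q / D) * t) := by
      rw [← mul_assoc, Nat.mul_div_cancel' hDQ]
    rw [this, Nat.add_mul_div_left _ _ hDpos]
  rw [hsplit, hχ, hχ]
  push_cast
  simp [ZMod.natCast_self]
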